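/- Let d ≥ 2 and define the d⁴×d⁴ matrix J₀ = (1/(d²−1)) ( 1 ⊗ (1 − (1/d) S) + T ⊗ (S − (1/d) 1) ), where the first Kronecker factor carries the output registers and the second the input registers. Then for every d²×d² complex matrix ρ with Tr(ρ) = 1, the partial trace over the second (input) tensor factor satisfies Tr₂ ( J₀ (1 ⊗ ρ^⊤) ) = (1/(d(d²−1))) ( (d − Tr(S ρ^⊤)) 1 + (d · Tr(S ρ^⊤) − 1) T ). -/

import Mathlib

open Matrix Kronecker

/-- The `d²×d²` swap matrix `S`, with entries `S_{(i,j),(k,l)} = δ_{il} δ_{jk}`. -/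
def swapMatrix (d : ℕ) : Matrix (Fin d × Fin d) (Fin d × Fin d) ℂ :=
  Matrix.of fun p q => if p.1 = q.2 ∧ p.2 = q.1 then 1 else 0

/-- The diagonal part `T = Δ(S)` of the swap matrix, with entries
`T_{(i,j),(k,l)} = δ_{ik} δ_{jl} δ_{ij}`. -/
def diagSwapMatrix (d : ℕ) : Matrix (Fin d × Fin d) (Fin d × Fin d) ℂ :=
  Matrix.of fun p q => if p.1 = q.1 ∧ p.2 = q.2 ∧ p.1 = p.2 then 1 else 0

/-- The partial trace over the second tensor factor:
`(Tr₂ M)_{a,b} = Σ_c M_{(a,c),(b,c)}`. -/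
noncomputable def ptrSecond {n m : Type*} [Fintype m]
    (M : Matrix (n × m) (n × m) ℂ) : Matrix n n ℂ :=
  Matrix.of fun a b => ∑ c : m, M (a, c) (b, c)

lemma ptr_kron {n m : Type*} [Fintype m] (X : Matrix n n ℂ) (Y : Matrix m m ℂ) :
    ptrSecond (X ⊗ₖ Y) = Y.trace • X := by
  ext a b
  simp only [ptrSecond, Matrix.of_apply, kroneckerMap_apply, Matrix.trace, Matrix.diag, Matrix.smul_apply, smul_eq_mul]
  rw [← Finset.mul_sum, mul_comm]

lemma ptr_add {n m : Type*} [Fintype m] (M N : Matrix (n × m) (n × m) ℂ) :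
    ptrSecond (M + N) = ptrSecond M + ptrSecond N := by
  ext a b; simp [ptrSecond, Finset.sum_add_distrib]

lemma ptr_smul {n m : Type*} [Fintype m] (c : ℂ) (M : Matrix (n × m) (n × m) ℂ) :
    ptrSecond (c • M) = c • ptrSecond M := by
  ext a b; simp [ptrSecond, Finset.mul_sum]

/-- For `J₀ = (1/(d²−1)) (1 ⊗ (1 − (1/d)S) + T ⊗ (S − (1/d)1))`, the Choi matrix of the
Haar-averaged doubled measurement channel, and any `ρ` of unit trace:
`Tr₂(J₀ (1 ⊗ ρᵀ)) = (1/(d(d²−1))) ((d − Tr(Sρᵀ)) 1 + (d Tr(Sρᵀ) − 1) T)`. -/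
theorem output_of_averaged_channel (d : ℕ) (hd : 2 ≤ d)
    (S : Matrix (Fin d × Fin d) (Fin d × Fin d) ℂ) (hS : S = swapMatrix d)
    (T : Matrix (Fin d × Fin d) (Fin d × Fin d) ℂ) (hT : T = diagSwapMatrix d)
    (J₀ : Matrix ((Fin d × Fin d) × (Fin d × Fin d)) ((Fin d × Fin d) × (Fin d × Fin d)) ℂ)
    (hJ₀ : J₀ = (1 / ((d : ℂ) ^ 2 - 1)) •
      ((1 : Matrix (Fin d × Fin d) (Fin d × Fin d) ℂ) ⊗ₖ
          ((1 : Matrix (Fin d × Fin d) (Fin d × Fin d) ℂ) - (1 / (d : ℂ)) • S) +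
        T ⊗ₖ (S - (1 / (d : ℂ)) • (1 : Matrix (Fin d × Fin d) (Fin d × Fin d) ℂ))))
    (ρ : Matrix (Fin d × Fin d) (Fin d × Fin d) ℂ) (hρ : ρ.trace = 1) :
    ptrSecond (J₀ * ((1 : Matrix (Fin d × Fin d) (Fin d × Fin d) ℂ) ⊗ₖ ρᵀ))
      = (1 / ((d : ℂ) * ((d : ℂ) ^ 2 - 1))) •
        ((((d : ℂ) - (S * ρᵀ).trace) • (1 : Matrix (Fin d × Fin d) (Fin d × Fin d) ℂ)) +
          (((d : ℂ) * (S * ρᵀ).trace - 1) • T)) := by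
  have hd0 : (d : ℂ) ≠ 0 := by
    exact_mod_cast Nat.cast_ne_zero.mpr (by omega)
  have hd1 : (d : ℂ) ^ 2 - 1 ≠ 0 := by
    have : ((d ^ 2 : ℕ) : ℂ) ≠ ((1 : ℕ) : ℂ) := by
      rw [Ne, Nat.cast_inj]; nlinarith
    intro h
    exact this (by push_cast; linear_combination h)
  set t := (S * ρᵀ).trace with ht
  rw [hJ₀, smul_mul_assoc, add_mul, ← Matrix.mul_kronecker_mul, ← Matrix.mul_kronecker_mul,
    one_mul, mul_one, ptr_smul, ptr_add, ptr_kron, ptr_kron]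
  have h1 : (((1 : Matrix (Fin d × Fin d) (Fin d × Fin d) ℂ) - (1 / (d : ℂ)) • S) * ρᵀ).trace
      = 1 - (1 / (d : ℂ)) * t := by
    rw [sub_mul, one_mul, smul_mul_assoc, Matrix.trace_sub, Matrix.trace_smul,
      Matrix.trace_transpose, hρ, smul_eq_mul]
  have h2 : ((S - (1 / (d : ℂ)) • (1 : Matrix (Fin d × Fin d) (Fin d × Fin d) ℂ)) * ρᵀ).trace
      = t - 1 / (d : ℂ) := by
    rw [sub_mul, smul_mul_assoc, one_mul, Matrix.trace_sub, Matrix.trace_smul,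
      Matrix.trace_transpose, hρ, smul_eq_mul, mul_one]
  have c1 : (1 / ((d : ℂ) ^ 2 - 1)) * (1 - 1 / (d : ℂ) * t)
      = (1 / ((d : ℂ) * ((d : ℂ) ^ 2 - 1))) * ((d : ℂ) - t) := by
    field_simp
  have c2 : (1 / ((d : ℂ) ^ 2 - 1)) * (t - 1 / (d : ℂ))
      = (1 / ((d : ℂ) * ((d : ℂ) ^ 2 - 1))) * ((d : ℂ) * t - 1) := by
    field_simp
  rw [h1, h2, smul_add, smul_add, smul_smul, smul_smul, smul_smul, smul_smul, c1, c2]
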